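/- Let X, A ∈ ℝ^{n×p} and set Λ = Ψ(AᵀX), C = XᵀX − I_p, d = A − XΛ, and δ = XC. Then ⟨d, δ⟩ = −tr(C²Λ), where ⟨·,·⟩ denotes the trace inner product ⟨U, V⟩ = tr(UᵀV). -/
import Mathlib


open Matrix

/-- with `Λ = Ψ(AᵀX)`, `C = XᵀX − I_p`, `d = A − XΛ` and `δ = XC`,
one has `⟨d, δ⟩ = −tr(C²Λ)` for the trace inner product `⟨U, V⟩ = tr(UᵀV)`. -/
theorem stmt7 {n p : ℕ} (X A : Matrix (Fin n) (Fin p) ℝ)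
    (Λ C : Matrix (Fin p) (Fin p) ℝ) (d δ : Matrix (Fin n) (Fin p) ℝ)
    (hΛ : Λ = (1 / 2 : ℝ) • (Aᵀ * X + (Aᵀ * X)ᵀ))
    (hC : C = Xᵀ * X - 1)
    (hd : d = A - X * Λ)
    (hδ : δ = X * C) :
    Matrix.trace (dᵀ * δ) = -Matrix.trace (C * C * Λ) := by
  subst hd hδ
  have hCs : Cᵀ = C := by subst hC; simp [Matrix.transpose_sub, Matrix.transpose_mul]
  have hΛs : Λᵀ = Λ := by
    subst hΛ
    simp [Matrix.transpose_smul, Matrix.transpose_add, add_comm]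
  have hXX : Xᵀ * X = C + 1 := by rw [hC]; abel
  have key : trace (Xᵀ * A * C) = trace (Aᵀ * X * C) := by
    calc trace (Xᵀ * A * C) = trace ((Xᵀ * A * C)ᵀ) := (Matrix.trace_transpose _).symm
    _ = trace (C * (Aᵀ * X)) := by simp [Matrix.transpose_mul, hCs, Matrix.mul_assoc]
    _ = trace (Aᵀ * X * C) := Matrix.trace_mul_comm _ _
  have hΛC : trace (Λ * C) = trace (Aᵀ * X * C) := by
    rw [hΛ, Matrix.smul_mul, trace_smul, Matrix.add_mul, trace_add, Matrix.transpose_mul,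
      Matrix.transpose_transpose, key, smul_eq_mul]
    ring
  calc trace ((A - X * Λ)ᵀ * (X * C))
      = trace (Aᵀ * X * C) - trace (Λ * ((C + 1) * C)) := by
        rw [Matrix.transpose_sub, Matrix.sub_mul, trace_sub, Matrix.transpose_mul, hΛs,
          Matrix.mul_assoc Aᵀ, Matrix.mul_assoc Λ, ← Matrix.mul_assoc Xᵀ, hXX]
    _ = trace (Aᵀ * X * C) - (trace (Λ * (C * C)) + trace (Λ * C)) := by
        rw [Matrix.add_mul, Matrix.mul_add, trace_add, Matrix.one_mul]
    _ = -trace (C * C * Λ) := by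
        rw [hΛC, Matrix.trace_mul_comm (C * C) Λ]; ring
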